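/- Let p > -1 and for t > 0 define I_p(t) = ∫₀¹ (1 + r²)^{-t} r^p dr. Then there exist constants c₁ > 0, c₂ > 0 and T > 0 such that for all t ≥ T one has c₁ t^{-(p+1)/2} ≤ I_p(t) ≤ c₂ t^{-(p+1)/2}. -/

import Mathlib

open MeasureTheory Real Set

theorem half_le_log (x : ℝ) (h0 : 0 < x) (h1 : x ≤ 1) : x / 2 ≤ Real.log (1 + x) := by
  have hx : (0:ℝ) < 1 + x := by linarith
  have h := Real.log_le_sub_one_of_pos (show (0:ℝ) < 1/(1+x) by positivity)
  rw [Real.log_div one_ne_zero (by linarith), Real.log_one] at h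
  have h2 : x / 2 ≤ x/(1+x) := by
    rw [div_le_div_iff₀ two_pos hx]; nlinarith
  have e : (1:ℝ) - 1/(1+x) = x/(1+x) := by field_simp; ring
  linarith

theorem stmt_0 (p : ℝ) (hp : -1 < p) :
    ∃ c₁ c₂ T : ℝ, 0 < c₁ ∧ 0 < c₂ ∧ 0 < T ∧
      ∀ t : ℝ, T ≤ t →
        c₁ * t ^ (-(p + 1) / 2) ≤ (∫ r in Set.Ioo (0 : ℝ) 1, (1 + r ^ 2) ^ (-t) * r ^ p) ∧
        (∫ r in Set.Ioo (0 : ℝ) 1, (1 + r ^ 2) ^ (-t) * r ^ p) ≤ c₂ * t ^ (-(p + 1) / 2) := by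
  have hp1 : 0 < p + 1 := by linarith
  have hΓ : 0 < Real.Gamma ((p+1)/2) := Real.Gamma_pos_of_pos (by linarith)
  refine ⟨Real.exp (-1) / (p+1), 2 ^ ((p+1)/2) * (1/2) * Real.Gamma ((p+1)/2), 1,
    by positivity, by positivity, one_pos, ?_⟩
  intro t ht
  have ht0 : (0:ℝ) < t := lt_of_lt_of_le one_pos ht
  set f : ℝ → ℝ := fun r => (1 + r ^ 2) ^ (-t) * r ^ p with hf
  set g : ℝ → ℝ := fun r => r ^ p * Real.exp (-(t/2) * r ^ 2) with hg
  have hnn : ∀ r ∈ Set.Ioo (0:ℝ) 1, 0 ≤ f r := by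
    intro r hr
    have h1 : 0 < r := hr.1
    have h2 : (0:ℝ) < 1 + r ^ 2 := by positivity
    positivity
  have hnn' : 0 ≤ᵐ[volume.restrict (Set.Ioo (0:ℝ) 1)] f :=
    (ae_restrict_iff' measurableSet_Ioo).2 (ae_of_all _ hnn)
  have hmeas : Measurable f := by fun_prop
  -- pointwise upper bound
  have hpt : ∀ r ∈ Set.Ioo (0:ℝ) 1, f r ≤ g r := by
    intro r hr
    obtain ⟨h1, h2⟩ := hr
    have hr2 : 0 < r ^ 2 := by positivity
    have hr21 : r ^ 2 ≤ 1 := by nlinarith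
    have hlog := half_le_log (r ^ 2) hr2 hr21
    have hb : (0:ℝ) < 1 + r ^ 2 := by positivity
    have key : (1 + r ^ 2) ^ (-t) ≤ Real.exp (-(t/2) * r ^ 2) := by
      rw [Real.rpow_def_of_pos hb]
      apply Real.exp_le_exp.2
      nlinarith
    have : f r = (1 + r ^ 2) ^ (-t) * r ^ p := rfl
    rw [this, hg]
    calc (1 + r ^ 2) ^ (-t) * r ^ p ≤ Real.exp (-(t/2) * r ^ 2) * r ^ p :=
          mul_le_mul_of_nonneg_right key (by positivity)
      _ = r ^ p * Real.exp (-(t/2) * r ^ 2) := mul_comm _ _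
  -- integrability of g on Ioi 0
  have hgi : IntegrableOn g (Set.Ioi (0:ℝ)) :=
    integrableOn_rpow_mul_exp_neg_mul_sq (half_pos ht0) hp
  have hgi1 : IntegrableOn g (Set.Ioo (0:ℝ) 1) := hgi.mono_set Set.Ioo_subset_Ioi_self
  -- integrability of f on Ioo 0 1
  have hfi : IntegrableOn f (Set.Ioo (0:ℝ) 1) := by
    apply Integrable.mono' hgi1 (hmeas.aestronglyMeasurable.restrict)
    refine (ae_restrict_iff' measurableSet_Ioo).2 (ae_of_all _ fun r hr => ?_)
    rw [Real.norm_eq_abs, abs_of_nonneg (hnn r hr)]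
    exact hpt r hr
  constructor
  · -- lower bound
    set ε : ℝ := t ^ (-(1/2) : ℝ) with hε
    have hε0 : 0 < ε := Real.rpow_pos_of_pos ht0 _
    have hε1 : ε ≤ 1 := Real.rpow_le_one_of_one_le_of_nonpos ht (by norm_num)
    have hε2 : ε ^ 2 = t⁻¹ := by
      rw [hε, ← Real.rpow_natCast (t ^ (-(1/2):ℝ)) 2, ← Real.rpow_mul ht0.le]
      norm_num [Real.rpow_neg_one]
    have hptl : ∀ r ∈ Set.Ioo (0:ℝ) ε, Real.exp (-1) * r ^ p ≤ f r := by
      intro r hr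
      obtain ⟨h1, h2⟩ := hr
      have hb : (0:ℝ) < 1 + r ^ 2 := by positivity
      have hlog : Real.log (1 + r ^ 2) ≤ r ^ 2 := by
        have := Real.log_le_sub_one_of_pos hb; linarith
      have hr2 : r ^ 2 ≤ t⁻¹ := by
        rw [← hε2]; nlinarith
      have key : Real.exp (-1) ≤ (1 + r ^ 2) ^ (-t) := by
        rw [Real.rpow_def_of_pos hb]
        apply Real.exp_le_exp.2
        have : t * r ^ 2 ≤ 1 := by
          calc t * r ^ 2 ≤ t * t⁻¹ := mul_le_mul_of_nonneg_left hr2 ht0.le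
            _ = 1 := mul_inv_cancel₀ ht0.ne'
        nlinarith [mul_le_mul_of_nonneg_left hlog ht0.le]
      exact mul_le_mul_of_nonneg_right key (by positivity)
    have hint_rpow : IntegrableOn (fun r : ℝ => Real.exp (-1) * r ^ p) (Set.Ioo (0:ℝ) ε) :=
      (((intervalIntegral.intervalIntegrable_rpow' hp (a := 0) (b := ε)).1).mono_set
        Set.Ioo_subset_Ioc_self).const_mul _
    have step1 : ∫ r in Set.Ioo (0:ℝ) ε, Real.exp (-1) * r ^ p ≤ ∫ r in Set.Ioo (0:ℝ) ε, f r :=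
      setIntegral_mono_on hint_rpow (hfi.mono_set (Set.Ioo_subset_Ioo_right hε1))
        measurableSet_Ioo hptl
    have step2 : ∫ r in Set.Ioo (0:ℝ) ε, f r ≤ ∫ r in Set.Ioo (0:ℝ) 1, f r :=
      setIntegral_mono_set hfi hnn' ((Set.Ioo_subset_Ioo_right hε1).eventuallyLE)
    have hval : ∫ r in Set.Ioo (0:ℝ) ε, Real.exp (-1) * r ^ p
        = Real.exp (-1) / (p+1) * t ^ (-(p + 1) / 2) := by
      rw [MeasureTheory.integral_const_mul, ← MeasureTheory.integral_Ioc_eq_integral_Ioo,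
        ← intervalIntegral.integral_of_le hε0.le, integral_rpow (Or.inl hp)]
      rw [Real.zero_rpow (ne_of_gt hp1), hε, ← Real.rpow_mul ht0.le]
      rw [show (-(1/2) * (p+1) : ℝ) = -(p+1)/2 by ring]
      ring
    calc Real.exp (-1) / (p+1) * t ^ (-(p + 1) / 2)
        = ∫ r in Set.Ioo (0:ℝ) ε, Real.exp (-1) * r ^ p := hval.symm
      _ ≤ ∫ r in Set.Ioo (0:ℝ) ε, f r := step1
      _ ≤ ∫ r in Set.Ioo (0:ℝ) 1, f r := step2
  · -- upper bound
    have step1 : ∫ r in Set.Ioo (0:ℝ) 1, f r ≤ ∫ r in Set.Ioo (0:ℝ) 1, g r :=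
      setIntegral_mono_on hfi hgi1 measurableSet_Ioo hpt
    have hg_nn : 0 ≤ᵐ[volume.restrict (Set.Ioi (0:ℝ))] g := by
      refine (ae_restrict_iff' measurableSet_Ioi).2 (ae_of_all _ fun r hr => ?_)
      have : 0 < r := hr
      positivity
    have step2 : ∫ r in Set.Ioo (0:ℝ) 1, g r ≤ ∫ r in Set.Ioi (0:ℝ), g r :=
      setIntegral_mono_set hgi hg_nn (Set.Ioo_subset_Ioi_self.eventuallyLE)
    have hval : ∫ r in Set.Ioi (0:ℝ), g r
        = (t/2) ^ (-(p + 1) / 2) * (1/2) * Real.Gamma ((p+1)/2) := by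
      have := integral_rpow_mul_exp_neg_mul_rpow (p := 2) (q := p) (b := t/2)
        two_pos hp (half_pos ht0)
      rw [← this]
      refine setIntegral_congr_fun measurableSet_Ioi (fun r hr => ?_)
      rw [hg]
      norm_num [Real.rpow_two]
    have hsc : (t/2 : ℝ) ^ (-(p + 1) / 2) = 2 ^ ((p+1)/2) * t ^ (-(p + 1) / 2) := by
      rw [Real.div_rpow ht0.le (by norm_num),
        show (-(p+1)/2 : ℝ) = -((p+1)/2) by ring,
        Real.rpow_neg (by norm_num : (0:ℝ) ≤ 2)]
      field_simp
    calc ∫ r in Set.Ioo (0:ℝ) 1, f r ≤ ∫ r in Set.Ioi (0:ℝ), g r := step1.trans step2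
      _ = (t/2) ^ (-(p + 1) / 2) * (1/2) * Real.Gamma ((p+1)/2) := hval
      _ = 2 ^ ((p+1)/2) * (1/2) * Real.Gamma ((p+1)/2) * t ^ (-(p + 1) / 2) := by
          rw [hsc]; ring
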